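/- Let α, β be nonzero real numbers with α ≠ β, let λ ≥ 1 and set t = (λ + 1/λ)/2. If t = ψ(α,β), then there exists a nonzero vector v₀ ∈ ℝ² such that {v ∈ ℝ² : det(X_α(v), X_β^λ(v)) = 0} = ℝ·v₀; that is, the tangency set of the pair (L_α, L_β^λ) is a single line through the origin. -/

import Mathlib

noncomputable def psi (α β : ℝ) : ℝ :=
  (-(α * β) + |α * β| * Real.sqrt ((α ^ 2 + 1) * (β ^ 2 + 1))) / (α ^ 2 * β ^ 2)

/-- `det2 v w = v₁w₂ − v₂w₁`. -/
def det2 (v w : ℝ × ℝ) : ℝ := v.1 * w.2 - v.2 * w.1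

/-- The logarithmic vector field `X_α(x,y) = (x − αy, αx + y)`. -/
def Xlog (α : ℝ) (v : ℝ × ℝ) : ℝ × ℝ := (v.1 - α * v.2, α * v.1 + v.2)

/-- The pushforward of `X_β` by `B_λ = diag(1,λ)`. -/
noncomputable def XlogLam (β l : ℝ) (v : ℝ × ℝ) : ℝ × ℝ :=
  (v.1 - (β / l) * v.2, l * β * v.1 + v.2)

theorem tangency_set_one_line (α β l : ℝ) (hα : α ≠ 0) (hβ : β ≠ 0)
    (hαβ : α ≠ β) (hl : 1 ≤ l) (ht : (l + 1 / l) / 2 = psi α β) :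
    ∃ v₀ : ℝ × ℝ, v₀ ≠ 0 ∧
      {v : ℝ × ℝ | det2 (Xlog α v) (XlogLam β l v) = 0} =
        Set.range fun c : ℝ => c • v₀ := by
  have hl0 : (0:ℝ) < l := lt_of_lt_of_le one_pos hl
  have hl0' : l ≠ 0 := ne_of_gt hl0
  set p := psi α β with hp
  have hs : Real.sqrt ((α ^ 2 + 1) * (β ^ 2 + 1)) ^ 2 = (α ^ 2 + 1) * (β ^ 2 + 1) :=
    Real.sq_sqrt (by positivity)
  have h1 : α ^ 2 * β ^ 2 * p = -(α * β) + |α * β| * Real.sqrt ((α ^ 2 + 1) * (β ^ 2 + 1)) := by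
    rw [hp, psi]; field_simp
  have hab : (α ^ 2 * β ^ 2 : ℝ) ≠ 0 := by positivity
  have hD : α ^ 2 * β ^ 2 * p ^ 2 + 2 * (α * β) * p + 1 = (α ^ 2 + 1) * (β ^ 2 + 1) := by
    have h2 : (α ^ 2 * β ^ 2 * p + α * β) ^ 2 = α ^ 2 * β ^ 2 * ((α ^ 2 + 1) * (β ^ 2 + 1)) := by
      rw [h1]
      have habs : |α * β| ^ 2 = (α * β) ^ 2 := sq_abs _
      nlinarith [hs, habs]
    apply mul_left_cancel₀ hab
    linear_combination h2
  have htl : l ^ 2 + 1 = 2 * p * l := by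
    have h := ht
    field_simp at h
    linarith [h]
  set A := l * β - α with hAdef
  set B := α * β * (1 / l - l) with hBdef
  set C := β / l - α with hCdef
  have hdet : ∀ v : ℝ × ℝ, det2 (Xlog α v) (XlogLam β l v)
      = A * v.1 ^ 2 + B * v.1 * v.2 + C * v.2 ^ 2 := by
    intro v
    simp only [det2, Xlog, XlogLam, hAdef, hBdef, hCdef]
    field_simp
    ring
  have hdisc : B ^ 2 = 4 * A * C := by
    rw [hBdef, hAdef, hCdef]
    field_simp
    linear_combination (4 * l ^ 2) * hD
      + (α ^ 2 * β ^ 2 * (l ^ 2 + 1 + 2 * p * l) + 4 * α * β * l) * htl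
  have hA0 : A ≠ 0 := by
    intro hA
    have hB2 : B ^ 2 = 0 := by rw [hdisc, hA]; ring
    have hB0 : B = 0 := by
      exact pow_eq_zero_iff (by norm_num) |>.1 hB2
    have h3 : (1 : ℝ) / l - l = 0 := by
      rcases mul_eq_zero.1 (hBdef ▸ hB0) with h | h
      · exact absurd h (mul_ne_zero hα hβ)
      · exact h
    have hl1 : l = 1 := by
      have h4 : l ^ 2 = 1 := by field_simp at h3; nlinarith [h3]
      nlinarith [h4, hl0]
    apply hαβ
    rw [hAdef, hl1] at hA
    linarith
  clear_value A B C
  refine ⟨(-B, 2 * A), ?_, ?_⟩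
  · intro h
    have h2 := congrArg Prod.snd h
    simp at h2
    exact hA0 h2
  · ext v
    simp only [Set.mem_setOf_eq, Set.mem_range, hdet]
    constructor
    · intro h
      have hsq : (2 * A * v.1 + B * v.2) ^ 2 = 0 := by
        linear_combination (4 * A) * h + v.2 ^ 2 * hdisc
      have hlin : 2 * A * v.1 + B * v.2 = 0 :=
        pow_eq_zero_iff (by norm_num) |>.1 hsq
      have h2A : (2 : ℝ) * A ≠ 0 := by simpa using hA0
      refine ⟨v.2 / (2 * A), ?_⟩
      apply Prod.ext
      · simp only [Prod.smul_fst, smul_eq_mul]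
        field_simp
        linarith [hlin]
      · simp only [Prod.smul_snd, smul_eq_mul]
        field_simp
    · rintro ⟨c, rfl⟩
      simp only [Prod.smul_fst, Prod.smul_snd, smul_eq_mul]
      linear_combination (-(A * c ^ 2)) * hdisc
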